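/- arXiv:1702.00520 — 2 statements merged into one kernel-verified Lean document; each statement's English description precedes it below -/
import Mathlib

section
/- With the even function α(ξ) = m_φ(ξ/2 + π)Φ(ξ/2) from the Meyer wavelet construction built from Φ(ξ) = (1/√(2π))cos((π/2)g((3/(2π))|ξ|−1)) with g as in Example 3.1, the value ψ(0) = (2/√(2π)) ∫_{2π/3}^{8π/3} cos(ξ/2) α(ξ) dξ satisfies |ψ(0)| ≥ (√3/π) cos((π/2) g(1/2)) > 0; in particular ψ(0) ≠ 0. -/
open Real MeasureTheory intervalIntegral

noncomputable def auxF (g : ℝ → ℝ) : ℝ → ℝ := fun ξ =>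
  Real.cos (π/2 * g (3/(2*π) * |ξ - 2*π| - 1)) *
    Real.cos (π/2 * g (3/(2*π) * |ξ/2| - 1)) * Real.cos (ξ/2)

noncomputable def auxf1 (g : ℝ → ℝ) : ℝ → ℝ := fun t =>
  Real.cos (π*(t+1)/3) * Real.sin (π/2 * g t)

noncomputable def auxf2 (g : ℝ → ℝ) : ℝ → ℝ := fun t =>
  Real.cos (2*π*(t+1)/3) * Real.cos (π/2 * g t)

noncomputable def auxf3 (g : ℝ → ℝ) : ℝ → ℝ := fun t =>
  Real.cos (2*π*(2-t)/3) * Real.sin (π/2 * g t)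

noncomputable def auxD (g : ℝ → ℝ) : ℝ → ℝ := fun t => -(auxf1 g t + 2 * auxf3 g t)

lemma auxF_cont {g : ℝ → ℝ} (hgc : Continuous g) : Continuous (auxF g) := by
  unfold auxF; fun_prop

lemma auxf1_cont {g : ℝ → ℝ} (hgc : Continuous g) : Continuous (auxf1 g) := by
  unfold auxf1; fun_prop

lemma auxf2_cont {g : ℝ → ℝ} (hgc : Continuous g) : Continuous (auxf2 g) := by
  unfold auxf2; fun_prop

lemma auxf3_cont {g : ℝ → ℝ} (hgc : Continuous g) : Continuous (auxf3 g) := by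
  unfold auxf3; fun_prop

lemma auxD_cont {g : ℝ → ℝ} (hgc : Continuous g) : Continuous (auxD g) := by
  unfold auxD; exact ((auxf1_cont hgc).add (continuous_const.mul (auxf3_cont hgc))).neg

lemma sin_cos_aux {x : ℝ} (h0 : 0 ≤ x) (h1 : x ≤ π / 2) :
    1 ≤ Real.sin x + Real.cos x := by
  have hs : 0 ≤ Real.sin x := Real.sin_nonneg_of_nonneg_of_le_pi h0 (by linarith [Real.pi_pos])
  have hc : 0 ≤ Real.cos x := Real.cos_nonneg_of_mem_Icc ⟨by linarith [Real.pi_pos], h1⟩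
  nlinarith [Real.sin_sq_add_cos_sq x, Real.sin_le_one x, Real.cos_le_one x]

lemma aux_key (g : ℝ → ℝ) (hgb : ∀ x : ℝ, 0 ≤ g x ∧ g x ≤ 1)
    (hgs : ∀ x : ℝ, g x + g (1 - x) = 1) {t : ℝ} (ht0 : 0 ≤ t) (ht1 : t ≤ 1) :
    2 * Real.cos (2*π/3*t - π/3) - |Real.cos (π/3*t + π/3)| ≤
      auxD g t + auxD g (1 - t) := by
  have hπ := Real.pi_pos
  unfold auxD auxf1 auxf3
  rw [show π*(t+1)/3 = π/3*t + π/3 by ring]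
  rw [show 2*π*(2-t)/3 = π - (2*π/3*t - π/3) by ring, Real.cos_pi_sub]
  rw [show π*((1-t)+1)/3 = π - (π/3*t + π/3) by ring, Real.cos_pi_sub]
  rw [show 2*π*(2-(1-t))/3 = π - -(2*π/3*t - π/3) by ring, Real.cos_pi_sub, Real.cos_neg]
  rw [show g (1-t) = 1 - g t by linarith [hgs t]]
  rw [show π/2 * (1 - g t) = π/2 - π/2 * g t by ring, Real.sin_pi_div_two_sub]
  set s := Real.sin (π/2 * g t) with hsdef
  set c := Real.cos (π/2 * g t) with hcdef
  set c1 := Real.cos (π/3*t + π/3) with hc1def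
  set c2 := Real.cos (2*π/3*t - π/3) with hc2def
  have hg0 := (hgb t).1
  have hg1 := (hgb t).2
  have hx0 : 0 ≤ π/2 * g t := mul_nonneg (by positivity) hg0
  have hx1 : π/2 * g t ≤ π/2 := by nlinarith
  have hs0 : 0 ≤ s := Real.sin_nonneg_of_nonneg_of_le_pi hx0 (by linarith)
  have hs1 : s ≤ 1 := Real.sin_le_one _
  have hc0 : 0 ≤ c := Real.cos_nonneg_of_mem_Icc ⟨by linarith, hx1⟩
  have hc1' : c ≤ 1 := Real.cos_le_one _
  have hsc : 1 ≤ s + c := sin_cos_aux hx0 hx1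
  have hc2 : 0 ≤ c2 :=
    Real.cos_nonneg_of_mem_Icc ⟨by nlinarith, by nlinarith⟩
  rcases abs_cases c1 with ⟨habs, h1s⟩ | ⟨habs, h1s⟩ <;> rw [habs]
  · nlinarith [mul_nonneg hc2 (by linarith : (0:ℝ) ≤ s + c - 1),
      mul_nonneg h1s (show (0:ℝ) ≤ c - s + 1 by linarith)]
  · nlinarith [mul_nonneg hc2 (by linarith : (0:ℝ) ≤ s + c - 1),
      mul_nonneg (by linarith : (0:ℝ) ≤ -c1) (show (0:ℝ) ≤ s + 1 - c by linarith)]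

set_option maxHeartbeats 1000000 in
theorem stmt_7 (g Φ mφ α : ℝ → ℝ) (hgc : Continuous g)
    (hg0 : ∀ x ≤ (0 : ℝ), g x = 0) (hg1 : ∀ x : ℝ, 1 ≤ x → g x = 1)
    (hgb : ∀ x : ℝ, 0 ≤ g x ∧ g x ≤ 1)
    (hgs : ∀ x : ℝ, g x + g (1 - x) = 1)
    (hΦ : ∀ ξ : ℝ, Φ ξ = (Real.sqrt (2 * π))⁻¹ *
      Real.cos (π / 2 * g (3 / (2 * π) * |ξ| - 1)))
    (hmper : ∀ ξ : ℝ, mφ (ξ + 2 * π) = mφ ξ)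
    (hmdef : ∀ ξ ∈ Set.Ico (-π) π, mφ ξ = Real.sqrt (2 * π) * Φ (2 * ξ))
    (hα : ∀ ξ : ℝ, α ξ = mφ (ξ / 2 + π) * Φ (ξ / 2))
    (ψ0 : ℝ)
    (hψ0 : ψ0 = 2 / Real.sqrt (2 * π) *
      ∫ ξ in (2 * π / 3)..(8 * π / 3), Real.cos (ξ / 2) * α ξ) :
    Real.sqrt 3 / π * Real.cos (π / 2 * g (1 / 2)) ≤ |ψ0| ∧
      0 < Real.sqrt 3 / π * Real.cos (π / 2 * g (1 / 2)) ∧ ψ0 ≠ 0 := by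
  have hπ : (0:ℝ) < π := Real.pi_pos
  have hπ' : (π:ℝ) ≠ 0 := ne_of_gt hπ
  have hs2 : (0:ℝ) < Real.sqrt (2*π) := Real.sqrt_pos.2 (by positivity)
  have hss : Real.sqrt (2*π) * Real.sqrt (2*π) = 2*π := Real.mul_self_sqrt (by positivity)
  have hg12 : g (1/2) = 1/2 := by
    have h := hgs (1/2)
    norm_num at h
    linarith
  have hrhs : Real.sqrt 3 / π * Real.cos (π / 2 * g (1 / 2)) =
      Real.sqrt 3 / π * (Real.sqrt 2 / 2) := by
    rw [hg12, show π/2 * (1/2:ℝ) = π/4 by ring, Real.cos_pi_div_four]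
  have hrpos : 0 < Real.sqrt 3 / π * (Real.sqrt 2 / 2) := by positivity
  -- Step A : rewrite the integrand
  have key : ∀ A B C : ℝ, C * (Real.sqrt (2*π) * ((Real.sqrt (2*π))⁻¹ * A) *
      ((Real.sqrt (2*π))⁻¹ * B)) = (Real.sqrt (2*π))⁻¹ * (A * B * C) := by
    intro A B C
    rw [show C * (Real.sqrt (2*π) * ((Real.sqrt (2*π))⁻¹ * A) * ((Real.sqrt (2*π))⁻¹ * B)) =
      (Real.sqrt (2*π) * (Real.sqrt (2*π))⁻¹) * ((Real.sqrt (2*π))⁻¹ * (A * B * C)) by ring,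
      mul_inv_cancel₀ hs2.ne', one_mul]
  have hA : Set.EqOn (fun ξ => Real.cos (ξ/2) * α ξ)
      (fun ξ => (Real.sqrt (2*π))⁻¹ * auxF g ξ) (Set.uIcc (2 * π / 3) (8 * π / 3)) := by
    intro ξ hξ
    rw [Set.uIcc_of_le (by linarith)] at hξ
    obtain ⟨hξ1, hξ2⟩ := hξ
    have e2 : mφ (ξ/2 + π) = Real.sqrt (2*π) * Φ (2*(ξ/2 - π)) := by
      rw [show ξ/2 + π = (ξ/2 - π) + 2*π by ring, hmper]
      exact hmdef _ ⟨by linarith, by linarith⟩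
    simp only [auxF]
    rw [hα, e2, show (2*(ξ/2 - π) : ℝ) = ξ - 2*π by ring, hΦ (ξ - 2*π), hΦ (ξ/2)]
    exact key _ _ _
  have hconst : 2 / Real.sqrt (2*π) * (Real.sqrt (2*π))⁻¹ = π⁻¹ := by
    rw [div_eq_mul_inv, mul_assoc, ← mul_inv, hss, mul_inv, ← mul_assoc,
      mul_inv_cancel₀ two_ne_zero, one_mul]
  have hI : ψ0 = π⁻¹ * ∫ ξ in (2 * π / 3)..(8 * π / 3), auxF g ξ := by
    rw [hψ0, intervalIntegral.integral_congr hA, intervalIntegral.integral_const_mul,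
      ← mul_assoc, hconst]
  -- Step B : simplify on the two pieces
  have hB1 : Set.EqOn (auxF g) (fun ξ => auxf1 g (3/(2*π) * ξ - 1))
      (Set.uIcc (2 * π / 3) (4 * π / 3)) := by
    intro ξ hξ
    rw [Set.uIcc_of_le (by linarith)] at hξ
    obtain ⟨hξ1, hξ2⟩ := hξ
    simp only [auxF, auxf1]
    have hb : 3/(2*π) * |ξ/2| - 1 ≤ 0 := by
      rw [abs_of_nonneg (by linarith : (0:ℝ) ≤ ξ/2), div_mul_eq_mul_div]
      rw [sub_nonpos, div_le_one (by positivity)]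
      linarith
    rw [hg0 _ hb, mul_zero, Real.cos_zero]
    rw [show |ξ - 2*π| = 2*π - ξ by rw [abs_of_nonpos (by linarith : ξ - 2*π ≤ 0)]; ring]
    have harg : 3/(2*π) * (2*π - ξ) - 1 = 1 - (3/(2*π)*ξ - 1) := by
      field_simp
      ring
    rw [harg, show g (1 - (3/(2*π)*ξ - 1)) = 1 - g (3/(2*π)*ξ - 1) by
        linarith [hgs (3/(2*π)*ξ - 1)]]
    rw [show π/2 * (1 - g (3/(2*π)*ξ - 1)) = π/2 - π/2 * g (3/(2*π)*ξ - 1) by ring,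
      Real.cos_pi_div_two_sub]
    rw [show π*((3/(2*π)*ξ - 1)+1)/3 = ξ/2 by field_simp; ring]
    ring
  have hB2 : Set.EqOn (auxF g) (fun ξ => auxf2 g (3/(4*π) * ξ - 1))
      (Set.uIcc (4 * π / 3) (8 * π / 3)) := by
    intro ξ hξ
    rw [Set.uIcc_of_le (by linarith)] at hξ
    obtain ⟨hξ1, hξ2⟩ := hξ
    simp only [auxF, auxf2]
    have hb : 3/(2*π) * |ξ - 2*π| - 1 ≤ 0 := by
      have habs : |ξ - 2*π| ≤ 2*π/3 := abs_le.mpr ⟨by linarith, by linarith⟩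
      rw [div_mul_eq_mul_div, sub_nonpos, div_le_one (by positivity)]
      linarith
    rw [hg0 _ hb, mul_zero, Real.cos_zero]
    rw [abs_of_nonneg (by linarith : (0:ℝ) ≤ ξ/2)]
    rw [show 3/(2*π) * (ξ/2) - 1 = 3/(4*π) * ξ - 1 by field_simp; ring]
    rw [show 2*π*((3/(4*π)*ξ - 1)+1)/3 = ξ/2 by field_simp; ring]
    ring
  -- Step C : substitutions
  have hsub1 : (∫ ξ in (2 * π / 3)..(4 * π / 3), auxF g ξ) =
      (2*π/3) * ∫ t in (0:ℝ)..1, auxf1 g t := by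
    rw [intervalIntegral.integral_congr hB1,
      intervalIntegral.integral_comp_mul_sub (auxf1 g)
        (by positivity : (0:ℝ) < 3/(2*π)).ne' 1]
    rw [show 3/(2*π) * (2 * π / 3) - 1 = 0 by field_simp; ring,
      show 3/(2*π) * (4 * π / 3) - 1 = 1 by field_simp; ring]
    rw [smul_eq_mul, inv_div]
  have hsub2 : (∫ ξ in (4 * π / 3)..(8 * π / 3), auxF g ξ) =
      (4*π/3) * ∫ t in (0:ℝ)..1, auxf2 g t := by
    rw [intervalIntegral.integral_congr hB2,
      intervalIntegral.integral_comp_mul_sub (auxf2 g)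
        (by positivity : (0:ℝ) < 3/(4*π)).ne' 1]
    rw [show 3/(4*π) * (4 * π / 3) - 1 = 0 by field_simp; ring,
      show 3/(4*π) * (8 * π / 3) - 1 = 1 by field_simp; ring]
    rw [smul_eq_mul, inv_div]
  -- split the integral
  have hFi1 : IntervalIntegrable (auxF g) volume (2 * π / 3) (4 * π / 3) :=
    (auxF_cont hgc).intervalIntegrable _ _
  have hFi2 : IntervalIntegrable (auxF g) volume (4 * π / 3) (8 * π / 3) :=
    (auxF_cont hgc).intervalIntegrable _ _
  have hsplit : (∫ ξ in (2 * π / 3)..(8 * π / 3), auxF g ξ) =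
      (∫ ξ in (2 * π / 3)..(4 * π / 3), auxF g ξ) +
        ∫ ξ in (4 * π / 3)..(8 * π / 3), auxF g ξ :=
    (intervalIntegral.integral_add_adjacent_intervals hFi1 hFi2).symm
  -- reflection : ∫ f2 = ∫ f3
  have hf2f3 : (∫ t in (0:ℝ)..1, auxf2 g t) = ∫ t in (0:ℝ)..1, auxf3 g t := by
    have heq : ∀ t : ℝ, auxf2 g t = auxf3 g (1 - t) := by
      intro t
      simp only [auxf2, auxf3]
      rw [show (2 - (1 - t) : ℝ) = t + 1 by ring]
      rw [show g (1 - t) = 1 - g t by linarith [hgs t]]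
      rw [show π/2 * (1 - g t) = π/2 - π/2 * g t by ring, Real.sin_pi_div_two_sub]
    calc (∫ t in (0:ℝ)..1, auxf2 g t) = ∫ t in (0:ℝ)..1, auxf3 g (1 - t) := by
          simp only [heq]
      _ = ∫ t in (1-(1:ℝ))..(1-(0:ℝ)), auxf3 g t :=
          intervalIntegral.integral_comp_sub_left (auxf3 g) 1
      _ = ∫ t in (0:ℝ)..1, auxf3 g t := by norm_num
  -- combine
  have hif1 : IntervalIntegrable (auxf1 g) volume 0 1 :=
    (auxf1_cont hgc).intervalIntegrable _ _
  have hif3 : IntervalIntegrable (auxf3 g) volume 0 1 :=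
    (auxf3_cont hgc).intervalIntegrable _ _
  have hif3' : IntervalIntegrable (fun t => 2 * auxf3 g t) volume 0 1 :=
    (continuous_const.mul (auxf3_cont hgc)).intervalIntegrable _ _
  have hψ : ψ0 = 2/3 * ∫ t in (0:ℝ)..1, (auxf1 g t + 2 * auxf3 g t) := by
    rw [hI, hsplit, hsub1, hsub2, hf2f3,
      intervalIntegral.integral_add hif1 hif3', intervalIntegral.integral_const_mul]
    field_simp
    ring
  set T := ∫ t in (0:ℝ)..1, (auxf1 g t + 2 * auxf3 g t) with hTdef
  -- integrability facts
  have hiD : IntervalIntegrable (auxD g) volume 0 1 :=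
    (auxD_cont hgc).intervalIntegrable _ _
  have hiD' : IntervalIntegrable (fun t => auxD g (1 - t)) volume 0 1 :=
    ((auxD_cont hgc).comp (continuous_const.sub continuous_id)).intervalIntegrable _ _
  have hiL : IntervalIntegrable
      (fun t => 2 * Real.cos (2*π/3*t - π/3) - |Real.cos (π/3*t + π/3)|) volume 0 1 := by
    apply Continuous.intervalIntegrable
    fun_prop
  have hDT : (∫ t in (0:ℝ)..1, auxD g t) = -T := by
    simp only [auxD]
    rw [intervalIntegral.integral_neg, hTdef]
  have hDrefl : (∫ t in (0:ℝ)..1, auxD g (1 - t)) = ∫ t in (0:ℝ)..1, auxD g t := by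
    rw [intervalIntegral.integral_comp_sub_left (auxD g) 1]
    norm_num
  have hsum2 : (∫ t in (0:ℝ)..1, (auxD g t + auxD g (1 - t))) = 2 * (-T) := by
    rw [intervalIntegral.integral_add hiD hiD', hDrefl, hDT]
    ring
  have hmono : (∫ t in (0:ℝ)..1,
        (2 * Real.cos (2*π/3*t - π/3) - |Real.cos (π/3*t + π/3)|)) ≤
      ∫ t in (0:ℝ)..1, (auxD g t + auxD g (1 - t)) :=
    intervalIntegral.integral_mono_on (by norm_num) hiL (hiD.add hiD')
      (fun t ht => aux_key g hgb hgs ht.1 ht.2)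
  -- value of the lower-bound integral
  have hiA : IntervalIntegrable (fun t => 2 * Real.cos (2*π/3*t - π/3)) volume 0 1 := by
    apply Continuous.intervalIntegrable; fun_prop
  have hiB : IntervalIntegrable (fun t => |Real.cos (π/3*t + π/3)|) volume 0 1 := by
    apply Continuous.intervalIntegrable; fun_prop
  have hAval : (∫ t in (0:ℝ)..1, 2 * Real.cos (2*π/3*t - π/3)) = 3 * Real.sqrt 3 / π := by
    rw [intervalIntegral.integral_const_mul,
      intervalIntegral.integral_comp_mul_sub Real.cos (by positivity : (0:ℝ) < 2*π/3).ne' (π/3)]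
    rw [show 2*π/3*(0:ℝ) - π/3 = -(π/3) by ring, show 2*π/3*(1:ℝ) - π/3 = π/3 by ring]
    rw [integral_cos, Real.sin_neg, Real.sin_pi_div_three, smul_eq_mul, inv_div]
    field_simp
    ring
  have hBval : (∫ t in (0:ℝ)..1, |Real.cos (π/3*t + π/3)|) = 3/π * (2 - Real.sqrt 3) := by
    have hi1 : IntervalIntegrable (fun t => |Real.cos (π/3*t + π/3)|) volume 0 (1/2) := by
      apply Continuous.intervalIntegrable; fun_prop
    have hi2 : IntervalIntegrable (fun t => |Real.cos (π/3*t + π/3)|) volume (1/2) 1 := by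
      apply Continuous.intervalIntegrable; fun_prop
    rw [← intervalIntegral.integral_add_adjacent_intervals hi1 hi2]
    have e1 : Set.EqOn (fun t => |Real.cos (π/3*t + π/3)|)
        (fun t => Real.cos (π/3*t + π/3)) (Set.uIcc 0 (1/2)) := by
      intro t ht
      rw [Set.uIcc_of_le (by norm_num)] at ht
      obtain ⟨ht0, ht1⟩ := ht
      have h1 : 0 ≤ π * t := mul_nonneg hπ.le ht0
      have h2 : π * t ≤ π * (1/2) := mul_le_mul_of_nonneg_left ht1 hπ.le
      have := Real.cos_nonneg_of_mem_Icc (x := π/3*t + π/3) ⟨by linarith, by linarith⟩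
      simpa using abs_of_nonneg this
    have e2 : Set.EqOn (fun t => |Real.cos (π/3*t + π/3)|)
        (fun t => -Real.cos (π/3*t + π/3)) (Set.uIcc (1/2) 1) := by
      intro t ht
      rw [Set.uIcc_of_le (by norm_num)] at ht
      obtain ⟨ht0, ht1⟩ := ht
      have h1 : π * (1/2) ≤ π * t := mul_le_mul_of_nonneg_left ht0 hπ.le
      have h2 : π * t ≤ π * 1 := mul_le_mul_of_nonneg_left ht1 hπ.le
      have := Real.cos_nonpos_of_pi_div_two_le_of_le (x := π/3*t + π/3)
        (by linarith) (by linarith)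
      simpa using abs_of_nonpos this
    have v1 : (∫ t in (0:ℝ)..(1/2), |Real.cos (π/3*t + π/3)|) = 3/π * (1 - Real.sqrt 3/2) := by
      rw [intervalIntegral.integral_congr e1,
        intervalIntegral.integral_comp_mul_add Real.cos (by positivity : (0:ℝ) < π/3).ne' (π/3)]
      rw [show π/3*(0:ℝ) + π/3 = π/3 by ring, show π/3*(1/2:ℝ) + π/3 = π/2 by ring]
      rw [integral_cos, Real.sin_pi_div_two, Real.sin_pi_div_three, smul_eq_mul, inv_div]
    have v2 : (∫ t in (1/2:ℝ)..1, |Real.cos (π/3*t + π/3)|) = 3/π * (1 - Real.sqrt 3/2) := by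
      rw [intervalIntegral.integral_congr e2, intervalIntegral.integral_neg,
        intervalIntegral.integral_comp_mul_add Real.cos (by positivity : (0:ℝ) < π/3).ne' (π/3)]
      rw [show π/3*(1/2:ℝ) + π/3 = π/2 by ring, show π/3*(1:ℝ) + π/3 = π - π/3 by ring]
      rw [integral_cos, Real.sin_pi_sub, Real.sin_pi_div_two, Real.sin_pi_div_three,
        smul_eq_mul, inv_div]
      ring
    rw [v1, v2]
    ring
  have hLval : (∫ t in (0:ℝ)..1,
      (2 * Real.cos (2*π/3*t - π/3) - |Real.cos (π/3*t + π/3)|)) =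
      3 * Real.sqrt 3 / π - 3/π * (2 - Real.sqrt 3) := by
    rw [intervalIntegral.integral_sub hiA hiB, hAval, hBval]
  have hTbound : 3/π * (Real.sqrt 3 - 1) ≤ -T := by
    have h2 : 3 * Real.sqrt 3/π - 3/π * (2 - Real.sqrt 3) = 2 * (3/π * (Real.sqrt 3 - 1)) := by
      ring
    rw [hLval] at hmono
    rw [hsum2] at hmono
    linarith
  -- numeric comparison
  have hnum : Real.sqrt 3 * (Real.sqrt 2 / 2) ≤ 2 * (Real.sqrt 3 - 1) := by
    have h2 : Real.sqrt 2 < 1.42 := by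
      rw [show (1.42:ℝ) = Real.sqrt (1.42^2) from (Real.sqrt_sq (by norm_num)).symm]
      exact Real.sqrt_lt_sqrt (by norm_num) (by norm_num)
    have h3 : Real.sqrt 3 < 1.74 := by
      rw [show (1.74:ℝ) = Real.sqrt (1.74^2) from (Real.sqrt_sq (by norm_num)).symm]
      exact Real.sqrt_lt_sqrt (by norm_num) (by norm_num)
    have h3' : (1.73:ℝ) < Real.sqrt 3 := by
      rw [show (1.73:ℝ) = Real.sqrt (1.73^2) from (Real.sqrt_sq (by norm_num)).symm]
      exact Real.sqrt_lt_sqrt (by norm_num) (by norm_num)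
    nlinarith [Real.sqrt_nonneg 2, Real.sqrt_nonneg 3]
  have habs : 2/3 * (-T) ≤ |ψ0| := by
    rw [hψ]
    calc 2/3 * (-T) ≤ 2/3 * |T| := by
          have := neg_le_abs T
          linarith
      _ = |2/3 * T| := by
          rw [abs_mul, abs_of_pos (show (0:ℝ) < 2/3 by norm_num)]
  have hfinal : Real.sqrt 3 / π * (Real.sqrt 2 / 2) ≤ |ψ0| := by
    have h1 : Real.sqrt 3 / π * (Real.sqrt 2 / 2) ≤ 2/3 * (3/π * (Real.sqrt 3 - 1)) := by
      rw [show Real.sqrt 3 / π * (Real.sqrt 2 / 2) = (Real.sqrt 3 * (Real.sqrt 2/2))/π by ring,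
        show 2/3 * (3/π * (Real.sqrt 3 - 1)) = (2*(Real.sqrt 3 - 1))/π by ring]
      exact (div_le_div_iff_of_pos_right hπ).mpr hnum
    calc Real.sqrt 3 / π * (Real.sqrt 2 / 2) ≤ 2/3 * (3/π * (Real.sqrt 3 - 1)) := h1
      _ ≤ 2/3 * (-T) := by linarith
      _ ≤ |ψ0| := habs
  refine ⟨?_, ?_, ?_⟩
  · rw [hrhs]; exact hfinal
  · rw [hrhs]; exact hrpos
  · intro h0
    rw [h0, abs_zero] at hfinal
    exact absurd hfinal (not_le.mpr hrpos)
end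

section
/- Let ψ⁰ : ℝ^D → ℝ be integrable with ∑_{k∈ℤ^D}|ψ⁰(x−k)| ≤ C for all x. For j ∈ ℤ, k ∈ ℤ^D set ψ⁰_{j,k}(x) = 2^{Dj/2}ψ⁰(2^j x − k), and for f ∈ L¹(ℝ^D) define P_j f = ∑_{k∈ℤ^D} ⟨f, ψ⁰_{j,k}⟩ ψ⁰_{j,k}. Then ‖P_j f‖_{L¹} ≤ C² ‖f‖_{L¹} for every j ∈ ℤ, with constant independent of j. -/
open MeasureTheory
open scoped ENNReal

section Aux

variable {ι : Type*} [Countable ι]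

private lemma aux_ofReal_abs_tsum (g : ι → ℝ) :
    ENNReal.ofReal |∑' k, g k| ≤ ∑' k, ENNReal.ofReal |g k| := by
  by_cases h : Summable g
  · have habs : Summable fun k => |g k| := h.abs
    calc ENNReal.ofReal |∑' k, g k| ≤ ENNReal.ofReal (∑' k, |g k|) := by
          apply ENNReal.ofReal_le_ofReal
          simpa [Real.norm_eq_abs] using
            norm_tsum_le_tsum_norm (f := g) (by simpa [Real.norm_eq_abs] using habs)
      _ = ∑' k, ENNReal.ofReal |g k| :=
          ENNReal.ofReal_tsum_of_nonneg (fun k => abs_nonneg _) habs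
  · rw [tsum_eq_zero_of_not_summable h]; simp

private lemma aux_ofReal_abs_integral_le {α : Type*} [MeasurableSpace α] {μ : Measure α}
    (g : α → ℝ) :
    ENNReal.ofReal |∫ y, g y ∂μ| ≤ ∫⁻ y, ENNReal.ofReal |g y| ∂μ := by
  by_cases hgi : Integrable g μ
  · calc ENNReal.ofReal |∫ y, g y ∂μ| ≤ ENNReal.ofReal (∫ y, |g y| ∂μ) :=
        ENNReal.ofReal_le_ofReal
          (by simpa [Real.norm_eq_abs] using norm_integral_le_integral_norm (μ := μ) g)
      _ = _ := ofReal_integral_eq_lintegral_ofReal hgi.abs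
          (Filter.Eventually.of_forall fun y => abs_nonneg _)
  · rw [integral_undef hgi]; simp

end Aux

section Periodization

variable {D : ℕ} {ψ : (Fin D → ℝ) → ℝ} {C : ℝ}

private lemma aux_periodization (hint : Integrable ψ)
    (hper : ∀ x : Fin D → ℝ, (∑' k : Fin D → ℤ, |ψ (x - fun i => (k i : ℝ))|) ≤ C) :
    (0 ≤ C) ∧ ((∫ x, |ψ x|) ≤ C) ∧
      (∀ᵐ z : Fin D → ℝ,
        (∑' k : Fin D → ℤ, ENNReal.ofReal |ψ (z - fun i => (k i : ℝ))|) ≤ ENNReal.ofReal C) := by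
  classical
  set e : (Fin D → ℤ) → (Fin D → ℝ) := fun k i => (k i : ℝ) with he
  set S : (Fin D → ℝ) → ℝ≥0∞ :=
    fun z => ∑' k : Fin D → ℤ, ENNReal.ofReal |ψ (z - e k)| with hS
  have hC : 0 ≤ C := le_trans (tsum_nonneg fun k => abs_nonneg _) (hper 0)
  have hg_meas : AEMeasurable (fun z => ENNReal.ofReal |ψ z|) volume :=
    (ENNReal.measurable_ofReal.comp measurable_abs).comp_aemeasurable
      hint.aestronglyMeasurable.aemeasurable
  have hgk_meas : ∀ k : Fin D → ℤ,
      AEMeasurable (fun z => ENNReal.ofReal |ψ (z - e k)|) volume := fun k =>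
    hg_meas.comp_quasiMeasurePreserving
      (measurePreserving_sub_right volume (e k)).quasiMeasurePreserving
  have hS_meas : AEMeasurable S volume := AEMeasurable.ennreal_tsum hgk_meas
  set F : Set (Fin D → ℝ) := Set.univ.pi fun _ => Set.Ico (0:ℝ) 1 with hFdef
  have hF : MeasurableSet F := MeasurableSet.univ_pi fun _ => measurableSet_Ico
  have hvolF : volume F = 1 := by
    rw [hFdef, volume_pi_pi]
    simp [Real.volume_Ico]
  set B : (Fin D → ℤ) → Set (Fin D → ℝ) := fun k => (fun z => z + e k) ⁻¹' F with hBdef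
  have hB_meas : ∀ k, MeasurableSet (B k) := fun k => hF.preimage (measurable_add_const (e k))
  have hmemB : ∀ (k : Fin D → ℤ) (z : Fin D → ℝ),
      z ∈ B k ↔ ∀ i, z i + (k i : ℝ) ∈ Set.Ico (0:ℝ) 1 := by
    intro k z
    simp [hBdef, hFdef, Set.mem_pi, he]
  have hkey : ∀ (k : Fin D → ℤ) (z : Fin D → ℝ), (∀ i, z i + (k i : ℝ) ∈ Set.Ico (0:ℝ) 1) →
      k = fun i => -⌊z i⌋ := by
    intro k z hz
    funext i
    have h0 : ⌊z i + (k i : ℝ)⌋ = 0 := Int.floor_eq_zero_iff.2 (hz i)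
    rw [Int.floor_add_intCast] at h0
    omega
  have hself : ∀ z : Fin D → ℝ, z ∈ B (fun i => -⌊z i⌋) := by
    intro z
    rw [hmemB]
    intro i
    push_cast
    constructor
    · have := Int.fract_nonneg (z i); rw [Int.fract] at this; linarith
    · have := Int.fract_lt_one (z i); rw [Int.fract] at this; linarith
  have hB_disj : Pairwise (Function.onFun Disjoint B) := by
    intro k k' hkk'
    refine Set.disjoint_left.2 fun z hz hz' => hkk' ?_
    rw [hkey k z ((hmemB k z).1 hz), hkey k' z ((hmemB k' z).1 hz')]
  have hB_union : (⋃ k, B k) = Set.univ :=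
    Set.eq_univ_of_forall fun z => Set.mem_iUnion.2 ⟨fun i => -⌊z i⌋, hself z⟩
  have key_translate : ∀ k : Fin D → ℤ,
      (∫⁻ z in F, ENNReal.ofReal |ψ (z - e k)|) = ∫⁻ z in B k, ENNReal.ofReal |ψ z| := by
    intro k
    rw [← lintegral_indicator hF, ← lintegral_indicator (hB_meas k)]
    have hpt : ∀ x, F.indicator (fun z => ENNReal.ofReal |ψ (z - e k)|) (x + e k)
        = (B k).indicator (fun z => ENNReal.ofReal |ψ z|) x := by
      intro x
      by_cases hx : x + e k ∈ F
      · rw [Set.indicator_of_mem hx, Set.indicator_of_mem (by exact hx), add_sub_cancel_right]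
      · rw [Set.indicator_of_notMem hx, Set.indicator_of_notMem (by exact hx)]
    calc (∫⁻ x, F.indicator (fun z => ENNReal.ofReal |ψ (z - e k)|) x)
        = ∫⁻ x, F.indicator (fun z => ENNReal.ofReal |ψ (z - e k)|) (x + e k) :=
          (lintegral_add_right_eq_self _ (e k)).symm
      _ = ∫⁻ x, (B k).indicator (fun z => ENNReal.ofReal |ψ z|) x := by simp_rw [hpt]
  have hperiodization : (∫⁻ z in F, S z) = ∫⁻ z, ENNReal.ofReal |ψ z| := by
    calc (∫⁻ z in F, S z)
        = ∑' k : Fin D → ℤ, ∫⁻ z in F, ENNReal.ofReal |ψ (z - e k)| :=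
          lintegral_tsum fun k => (hgk_meas k).restrict
      _ = ∑' k : Fin D → ℤ, ∫⁻ z in B k, ENNReal.ofReal |ψ z| := by
          exact tsum_congr fun k => key_translate k
      _ = ∫⁻ z in ⋃ k, B k, ENNReal.ofReal |ψ z| :=
          (lintegral_iUnion hB_meas hB_disj _).symm
      _ = ∫⁻ z, ENNReal.ofReal |ψ z| := by rw [hB_union, Measure.restrict_univ]
  have hL : ENNReal.ofReal (∫ x, |ψ x|) = ∫⁻ x, ENNReal.ofReal |ψ x| :=
    ofReal_integral_eq_lintegral_ofReal hint.abs (Filter.Eventually.of_forall fun x => abs_nonneg _)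
  have hL_ne_top : (∫⁻ x, ENNReal.ofReal |ψ x|) ≠ ⊤ := by
    rw [← hL]; exact ENNReal.ofReal_ne_top
  have hS_fin : ∀ z, S z ≠ ⊤ → S z ≤ ENNReal.ofReal C := by
    intro z hz
    have hsum' : Summable fun k : Fin D → ℤ => (|ψ (z - e k)|).toNNReal := by
      apply ENNReal.tsum_coe_ne_top_iff_summable.1
      exact hz
    have hsum : Summable fun k : Fin D → ℤ => |ψ (z - e k)| := by
      have := NNReal.summable_coe.2 hsum'
      simpa [Real.coe_toNNReal _ (abs_nonneg _)] using this
    calc S z = ENNReal.ofReal (∑' k : Fin D → ℤ, |ψ (z - e k)|) :=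
        (ENNReal.ofReal_tsum_of_nonneg (fun _ => abs_nonneg _) hsum).symm
      _ ≤ ENNReal.ofReal C := ENNReal.ofReal_le_ofReal (hper z)
  have he_add : ∀ k k₀ : Fin D → ℤ, e (k + k₀) = e k + e k₀ := by
    intro k k₀; funext i; simp [he]
  have hS_per : ∀ (z : Fin D → ℝ) (k₀ : Fin D → ℤ), S (z + e k₀) = S z := by
    intro z k₀
    calc S (z + e k₀)
        = ∑' k : Fin D → ℤ, ENNReal.ofReal |ψ (z + e k₀ - e (k + k₀))| :=
          ((Equiv.addRight k₀).tsum_eq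
            (fun k => ENNReal.ofReal |ψ (z + e k₀ - e k)|)).symm
      _ = S z := by
          refine tsum_congr fun k => ?_
          rw [he_add]
          congr 1
          congr 1
          abel
  have htop_null : volume {z : Fin D → ℝ | S z = ⊤} = 0 := by
    have h1 : ∀ᵐ z ∂(volume.restrict F), S z < ⊤ :=
      ae_lt_top' hS_meas.restrict (by rw [hperiodization]; exact hL_ne_top)
    have h2 : volume ({z | ¬ S z < ⊤} ∩ F) = 0 := by
      rw [ae_iff] at h1
      rwa [Measure.restrict_apply' hF] at h1
    have h2' : volume ({z : Fin D → ℝ | S z = ⊤} ∩ F) = 0 := by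
      refine measure_mono_null ?_ h2
      rintro z ⟨h1z, h2z⟩
      refine ⟨?_, h2z⟩
      show ¬ S z < ⊤
      have hzz : S z = ⊤ := h1z
      simp [hzz]
    have hsub : {z : Fin D → ℝ | S z = ⊤} ⊆
        ⋃ k : Fin D → ℤ, (fun z => z + e k) ⁻¹' ({z : Fin D → ℝ | S z = ⊤} ∩ F) := by
      intro z hz
      have hz' : S z = ⊤ := hz
      refine Set.mem_iUnion.2 ⟨fun i => -⌊z i⌋, ?_, ?_⟩
      · show S (z + e fun i => -⌊z i⌋) = ⊤
        rw [hS_per, hz']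
      · exact hself z
    refine measure_mono_null hsub (le_antisymm ?_ zero_le)
    calc volume (⋃ k : Fin D → ℤ, (fun z => z + e k) ⁻¹' ({z : Fin D → ℝ | S z = ⊤} ∩ F))
        ≤ ∑' k : Fin D → ℤ, volume ((fun z => z + e k) ⁻¹' ({z : Fin D → ℝ | S z = ⊤} ∩ F)) :=
          measure_iUnion_le _
      _ = ∑' _k : Fin D → ℤ, volume ({z : Fin D → ℝ | S z = ⊤} ∩ F) := by
          exact tsum_congr fun k => measure_preimage_add_right volume (e k) _
      _ = 0 := by rw [h2']; simp
  have h_ae : ∀ᵐ z : Fin D → ℝ, S z ≤ ENNReal.ofReal C := by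
    rw [ae_iff]
    refine measure_mono_null (fun z hz => ?_) htop_null
    simp only [Set.mem_setOf_eq] at hz ⊢
    by_contra h
    exact hz (hS_fin z h)
  have hIψC : (∫ x, |ψ x|) ≤ C := by
    have hchain : ENNReal.ofReal (∫ x, |ψ x|) ≤ ENNReal.ofReal C := by
      calc ENNReal.ofReal (∫ x, |ψ x|) = ∫⁻ z in F, S z := by rw [hL, hperiodization]
        _ ≤ ∫⁻ _z in F, ENNReal.ofReal C := lintegral_mono_ae (ae_restrict_of_ae h_ae)
        _ = ENNReal.ofReal C * volume F := by simp [lintegral_const, mul_comm]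
        _ = ENNReal.ofReal C := by rw [hvolF, mul_one]
    rwa [ENNReal.ofReal_le_ofReal_iff hC] at hchain
  exact ⟨hC, hIψC, h_ae⟩

end Periodization

theorem stmt_12 (D : ℕ) (hD : 1 ≤ D) (ψ : (Fin D → ℝ) → ℝ) (C : ℝ)
    (hint : Integrable ψ)
    (hper : ∀ x : Fin D → ℝ, (∑' k : Fin D → ℤ, |ψ (x - fun i => (k i : ℝ))|) ≤ C)
    (j : ℤ) (ψjk : (Fin D → ℤ) → (Fin D → ℝ) → ℝ)
    (hψjk : ∀ (k : Fin D → ℤ) (x : Fin D → ℝ),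
      ψjk k x = (2 : ℝ) ^ ((D : ℝ) * (j : ℝ) / 2) * ψ (fun i => (2 : ℝ) ^ j * x i - k i))
    (f : (Fin D → ℝ) → ℝ) (hf : Integrable f) :
    (∫ x : Fin D → ℝ,
        |∑' k : Fin D → ℤ, (∫ y : Fin D → ℝ, f y * ψjk k y) * ψjk k x|) ≤
      C ^ 2 * ∫ x : Fin D → ℝ, |f x| := by
  classical
  obtain ⟨hC, hIψC, h_ae⟩ := aux_periodization hint hper
  set If : ℝ := ∫ x : Fin D → ℝ, |f x| with hIf
  have hIf_nonneg : 0 ≤ If := integral_nonneg fun x => abs_nonneg _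
  have hRHS_nonneg : 0 ≤ C ^ 2 * If := mul_nonneg (sq_nonneg C) hIf_nonneg
  set a : ℝ := (2 : ℝ) ^ j with ha_def
  have ha_pos : 0 < a := zpow_pos (by norm_num) j
  set c : ℝ := (2 : ℝ) ^ ((D : ℝ) * (j : ℝ) / 2) with hc_def
  have hc_pos : 0 < c := Real.rpow_pos_of_pos (by norm_num) _
  set e : (Fin D → ℤ) → (Fin D → ℝ) := fun k i => (k i : ℝ) with he
  have hT : ∀ (k : Fin D → ℤ) (x : Fin D → ℝ),
      (fun i => (2 : ℝ) ^ j * x i - (k i : ℝ)) = a • x - e k := by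
    intro k x; funext i; simp [he, ha_def]
  set Iψ : ℝ := ∫ x : Fin D → ℝ, |ψ x| with hIψ
  have hint_k : ∀ k : Fin D → ℤ, Integrable fun x : Fin D → ℝ => ψ (a • x - e k) := by
    intro k
    have h1 : Integrable fun z : Fin D → ℝ => ψ (z - e k) := hint.comp_sub_right (e k)
    exact h1.comp_smul (ne_of_gt ha_pos)
  have hfinrank : Module.finrank ℝ (Fin D → ℝ) = D := by
    simp [Module.finrank_fintype_fun_eq_card]
  have hL1 : ∀ k : Fin D → ℤ,
      (∫ x : Fin D → ℝ, |ψ (a • x - e k)|) = a⁻¹ ^ D * Iψ := by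
    intro k
    have h := MeasureTheory.Measure.integral_comp_smul (μ := volume)
      (f := fun z : Fin D → ℝ => |ψ (z - e k)|) a
    rw [hfinrank, integral_sub_right_eq_self (fun z : Fin D → ℝ => |ψ z|) (e k)] at h
    rw [h, smul_eq_mul, abs_of_pos (by positivity), inv_pow, hIψ]
  have hJ : ∀ k : Fin D → ℤ,
      (∫⁻ x : Fin D → ℝ, ENNReal.ofReal |ψ (a • x - e k)|)
        = ENNReal.ofReal (a⁻¹ ^ D * Iψ) := by
    intro k
    rw [← hL1 k]
    exact (ofReal_integral_eq_lintegral_ofReal (hint_k k).abs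
      (Filter.Eventually.of_forall fun x => abs_nonneg _)).symm
  have hqmp : ∀ k : Fin D → ℤ,
      Measure.QuasiMeasurePreserving (fun x : Fin D → ℝ => a • x - e k) volume volume := by
    intro k
    exact ((measurePreserving_sub_right volume (e k)).quasiMeasurePreserving).comp
      (Measure.quasiMeasurePreserving_smul volume (ne_of_gt ha_pos))
  have hψa_meas : ∀ k : Fin D → ℤ,
      AEStronglyMeasurable (fun x : Fin D → ℝ => ψ (a • x - e k)) volume := fun k =>
    hint.aestronglyMeasurable.comp_quasiMeasurePreserving (hqmp k)
  have hψjk_eq : ∀ k : Fin D → ℤ, ψjk k = fun x => c * ψ (a • x - e k) := by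
    intro k; funext x; rw [hψjk k x, hT k x]
  have hψjk_meas : ∀ k : Fin D → ℤ, AEStronglyMeasurable (ψjk k) volume := by
    intro k; rw [hψjk_eq k]; exact (hψa_meas k).const_mul c
  set A : (Fin D → ℤ) → ℝ≥0∞ :=
    fun k => ∫⁻ y : Fin D → ℝ, ENNReal.ofReal (|f y| * |ψ (a • y - e k)|) with hA
  set Kc : ℝ≥0∞ :=
    ENNReal.ofReal c * (ENNReal.ofReal c * ENNReal.ofReal (a⁻¹ ^ D * Iψ)) with hKc
  -- the constant computation
  have hconst : c * (c * (a⁻¹ ^ D * Iψ)) = Iψ := by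
    have h1 : c * c = (2 : ℝ) ^ ((D : ℝ) * (j : ℝ)) := by
      rw [hc_def, ← Real.rpow_add (by norm_num : (0:ℝ) < 2)]
      ring_nf
    have h2 : a⁻¹ ^ D = (2 : ℝ) ^ (-((D : ℝ) * (j : ℝ))) := by
      have : a⁻¹ = (2 : ℝ) ^ (-j) := by rw [ha_def, zpow_neg]
      rw [this, ← zpow_natCast ((2:ℝ) ^ (-j)) D, ← zpow_mul, ← Real.rpow_intCast 2 (-j * D)]
      congr 1
      push_cast
      ring
    calc c * (c * (a⁻¹ ^ D * Iψ)) = (c * c) * a⁻¹ ^ D * Iψ := by ring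
      _ = (2:ℝ) ^ ((D:ℝ) * (j:ℝ)) * (2:ℝ) ^ (-((D:ℝ) * (j:ℝ))) * Iψ := by rw [h1, h2]
      _ = Iψ := by
          rw [← Real.rpow_add (by norm_num : (0:ℝ) < 2)]
          simp
  have hKc_le : Kc ≤ ENNReal.ofReal C := by
    have : Kc = ENNReal.ofReal (c * (c * (a⁻¹ ^ D * Iψ))) := by
      rw [hKc, ENNReal.ofReal_mul hc_pos.le, ENNReal.ofReal_mul hc_pos.le]
    rw [this, hconst]
    exact ENNReal.ofReal_le_ofReal hIψC
  -- a.e. bound for the scaled periodization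
  have hae2 : ∀ᵐ y : Fin D → ℝ,
      (∑' k : Fin D → ℤ, ENNReal.ofReal |ψ (a • y - e k)|) ≤ ENNReal.ofReal C := by
    have h0 := ae_iff.1 h_ae
    rw [ae_iff]
    have hpre : {y : Fin D → ℝ |
          ¬ (∑' k : Fin D → ℤ, ENNReal.ofReal |ψ (a • y - e k)|) ≤ ENNReal.ofReal C}
        = (fun y : Fin D → ℝ => a • y) ⁻¹'
            {z : Fin D → ℝ |
              ¬ (∑' k : Fin D → ℤ, ENNReal.ofReal |ψ (z - fun i => (k i : ℝ))|)
                ≤ ENNReal.ofReal C} := rfl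
    rw [hpre, Measure.addHaar_preimage_smul volume (ne_of_gt ha_pos), h0, mul_zero]
  -- measurability helpers
  have hf_meas : AEMeasurable f volume := hf.aestronglyMeasurable.aemeasurable
  have hA_meas : ∀ k : Fin D → ℤ,
      AEMeasurable (fun y : Fin D → ℝ =>
        ENNReal.ofReal (|f y| * |ψ (a • y - e k)|)) volume := by
    intro k
    exact ENNReal.measurable_ofReal.comp_aemeasurable
      ((measurable_abs.comp_aemeasurable hf_meas).mul
        (measurable_abs.comp_aemeasurable (hψa_meas k).aemeasurable))
  -- sum of A bound
  have hIf_eq : ENNReal.ofReal If = ∫⁻ y : Fin D → ℝ, ENNReal.ofReal |f y| :=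
    ofReal_integral_eq_lintegral_ofReal hf.abs (Filter.Eventually.of_forall fun y => abs_nonneg _)
  have hsumA : (∑' k : Fin D → ℤ, A k) ≤ ENNReal.ofReal C * ENNReal.ofReal If := by
    calc (∑' k : Fin D → ℤ, A k)
        = ∫⁻ y : Fin D → ℝ, ∑' k : Fin D → ℤ,
            ENNReal.ofReal (|f y| * |ψ (a • y - e k)|) := (lintegral_tsum hA_meas).symm
      _ = ∫⁻ y : Fin D → ℝ,
            ENNReal.ofReal |f y| * ∑' k : Fin D → ℤ, ENNReal.ofReal |ψ (a • y - e k)| := by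
          refine lintegral_congr fun y => ?_
          simp_rw [ENNReal.ofReal_mul (abs_nonneg (f y))]
          rw [ENNReal.tsum_mul_left]
      _ ≤ ∫⁻ y : Fin D → ℝ, ENNReal.ofReal |f y| * ENNReal.ofReal C := by
          refine lintegral_mono_ae (hae2.mono fun y hy => ?_)
          exact mul_le_mul_right hy _
      _ = ENNReal.ofReal C * ∫⁻ y : Fin D → ℝ, ENNReal.ofReal |f y| := by
          rw [lintegral_mul_const' _ _ ENNReal.ofReal_ne_top, mul_comm]
      _ = ENNReal.ofReal C * ENNReal.ofReal If := by rw [hIf_eq]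
  -- per-k bound
  have hperk : ∀ k : Fin D → ℤ,
      (∫⁻ x : Fin D → ℝ, ENNReal.ofReal |(∫ y, f y * ψjk k y) * ψjk k x|)
        ≤ Kc * A k := by
    intro k
    have hwk : ENNReal.ofReal |∫ y, f y * ψjk k y| ≤ ENNReal.ofReal c * A k := by
      have h1 : ENNReal.ofReal |∫ y, f y * ψjk k y|
          ≤ ∫⁻ y, ENNReal.ofReal |f y * ψjk k y| := aux_ofReal_abs_integral_le _
      have h2 : ∀ y, |f y * ψjk k y| = c * (|f y| * |ψ (a • y - e k)|) := by
        intro y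
        rw [hψjk k y, hT k y, abs_mul, abs_mul, abs_of_pos hc_pos]
        ring
      calc ENNReal.ofReal |∫ y, f y * ψjk k y|
          ≤ ∫⁻ y, ENNReal.ofReal |f y * ψjk k y| := h1
        _ = ∫⁻ y, ENNReal.ofReal c * ENNReal.ofReal (|f y| * |ψ (a • y - e k)|) := by
            simp_rw [h2, ENNReal.ofReal_mul hc_pos.le]
        _ = ENNReal.ofReal c * A k := lintegral_const_mul' _ _ ENNReal.ofReal_ne_top
    have habs : ∀ x, |(∫ y, f y * ψjk k y) * ψjk k x|
        = (|∫ y, f y * ψjk k y| * c) * |ψ (a • x - e k)| := by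
      intro x
      rw [hψjk k x, hT k x, abs_mul, abs_mul, abs_of_pos hc_pos]
      ring
    calc (∫⁻ x : Fin D → ℝ, ENNReal.ofReal |(∫ y, f y * ψjk k y) * ψjk k x|)
        = ∫⁻ x, ENNReal.ofReal (|∫ y, f y * ψjk k y| * c)
            * ENNReal.ofReal |ψ (a • x - e k)| := by
          simp_rw [habs, ENNReal.ofReal_mul (by positivity : (0:ℝ) ≤ |∫ y, f y * ψjk k y| * c)]
      _ = ENNReal.ofReal (|∫ y, f y * ψjk k y| * c)
            * ∫⁻ x, ENNReal.ofReal |ψ (a • x - e k)| :=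
          lintegral_const_mul' _ _ ENNReal.ofReal_ne_top
      _ = (ENNReal.ofReal |∫ y, f y * ψjk k y| * ENNReal.ofReal c)
            * ENNReal.ofReal (a⁻¹ ^ D * Iψ) := by
          rw [hJ k, ENNReal.ofReal_mul (abs_nonneg _)]
      _ ≤ ((ENNReal.ofReal c * A k) * ENNReal.ofReal c) * ENNReal.ofReal (a⁻¹ ^ D * Iψ) := by
          gcongr
      _ = Kc * A k := by rw [hKc]; ring
  -- measurability for lintegral_tsum in main chain
  have hmeas1 : ∀ k : Fin D → ℤ,
      AEMeasurable (fun x : Fin D → ℝ =>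
        ENNReal.ofReal |(∫ y, f y * ψjk k y) * ψjk k x|) volume := by
    intro k
    exact (ENNReal.measurable_ofReal.comp measurable_abs).comp_aemeasurable
      ((hψjk_meas k).aemeasurable.const_mul _)
  -- main lintegral bound
  have main : (∫⁻ x : Fin D → ℝ,
      ENNReal.ofReal |∑' k : Fin D → ℤ, (∫ y, f y * ψjk k y) * ψjk k x|)
        ≤ ENNReal.ofReal (C ^ 2 * If) := by
    calc (∫⁻ x : Fin D → ℝ,
        ENNReal.ofReal |∑' k : Fin D → ℤ, (∫ y, f y * ψjk k y) * ψjk k x|)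
        ≤ ∫⁻ x : Fin D → ℝ, ∑' k : Fin D → ℤ,
            ENNReal.ofReal |(∫ y, f y * ψjk k y) * ψjk k x| :=
          lintegral_mono fun x => aux_ofReal_abs_tsum _
      _ = ∑' k : Fin D → ℤ, ∫⁻ x : Fin D → ℝ,
            ENNReal.ofReal |(∫ y, f y * ψjk k y) * ψjk k x| := lintegral_tsum hmeas1
      _ ≤ ∑' k : Fin D → ℤ, Kc * A k := ENNReal.tsum_le_tsum hperk
      _ = Kc * ∑' k : Fin D → ℤ, A k := ENNReal.tsum_mul_left
      _ ≤ ENNReal.ofReal (C ^ 2 * If) := by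
          have hr : C ^ 2 * If = C * (C * If) := by ring
          rw [hr, ENNReal.ofReal_mul hC, ENNReal.ofReal_mul hC]
          exact mul_le_mul' hKc_le hsumA
  by_cases hFi : Integrable (fun x : Fin D → ℝ =>
      |∑' k : Fin D → ℤ, (∫ y, f y * ψjk k y) * ψjk k x|) volume
  · rw [integral_eq_lintegral_of_nonneg_ae
      (Filter.Eventually.of_forall fun x => abs_nonneg _) hFi.aestronglyMeasurable]
    exact ENNReal.toReal_le_of_le_ofReal hRHS_nonneg main
  · rw [integral_undef hFi]
    exact hRHS_nonneg
end
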